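/- Let 0 ≤ c₃ ≤ c₁ and 0 ≤ c₄ ≤ c₂ be real numbers, let f : [c₄,∞) → [0,∞) and g : [c₃,∞) → [0,∞) be continuous, and set F(z) = ∫_{c₄}^{z} f(s) ds and G(w) = ∫_{c₃}^{w} g(θ) dθ. Let 0 < ε < 1 < K and suppose ε·G(c₁) ≤ F(c₂) ≤ K·G(c₁). If w, z : [0,T) → ℝ are differentiable with w(0) = c₁, z(0) = c₂, w(t) ≥ c₃, z(t) ≥ c₄, and w'(t) = f(z(t)), z'(t) = g(w(t)) for all t ∈ [0,T), then ε·G(w(t)) ≤ F(z(t)) ≤ K·G(w(t)) for all t ∈ [0,T). -/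

import Mathlib

open Set MeasureTheory Filter

/-- Key invariant inequality in Theorem A′ of the paper: along solutions of the ODE
system `w' = f(z)`, `z' = g(w)`, the quantity `F(z) - ε G(w)` stays nonnegative and
`F(z) - K G(w)` stays nonpositive, where `F(z) = ∫_{c₄}^z f`, `G(w) = ∫_{c₃}^w g`. -/
theorem invariant_inequality_thmAprime
    (c₁ c₂ c₃ c₄ ε K T : ℝ)
    (hc₃ : 0 ≤ c₃) (hc₃₁ : c₃ ≤ c₁) (hc₄ : 0 ≤ c₄) (hc₄₂ : c₄ ≤ c₂)
    (f g : ℝ → ℝ)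
    (hf_cont : ContinuousOn f (Ici c₄)) (hg_cont : ContinuousOn g (Ici c₃))
    (hf_nonneg : ∀ s ∈ Ici c₄, 0 ≤ f s) (hg_nonneg : ∀ s ∈ Ici c₃, 0 ≤ g s)
    (F G : ℝ → ℝ)
    (hF : ∀ x, F x = ∫ s in c₄..x, f s) (hG : ∀ x, G x = ∫ θ in c₃..x, g θ)
    (hε : 0 < ε) (hε1 : ε < 1) (hK : 1 < K)
    (hFG1 : ε * G c₁ ≤ F c₂) (hFG2 : F c₂ ≤ K * G c₁)
    (w z : ℝ → ℝ)
    (hw0 : w 0 = c₁) (hz0 : z 0 = c₂)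
    (hw_ge : ∀ t ∈ Ico (0 : ℝ) T, c₃ ≤ w t)
    (hz_ge : ∀ t ∈ Ico (0 : ℝ) T, c₄ ≤ z t)
    (hw' : ∀ t ∈ Ico (0 : ℝ) T, HasDerivAt w (f (z t)) t)
    (hz' : ∀ t ∈ Ico (0 : ℝ) T, HasDerivAt z (g (w t)) t) :
    ∀ t ∈ Ico (0 : ℝ) T, ε * G (w t) ≤ F (z t) ∧ F (z t) ≤ K * G (w t) := by
  intro t ht
  obtain ⟨ht0, htT⟩ := ht
  set f' : ℝ → ℝ := fun x => f (max c₄ x) with hf'def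
  set g' : ℝ → ℝ := fun x => g (max c₃ x) with hg'def
  have hf'c : Continuous f' :=
    hf_cont.comp_continuous (continuous_const.max continuous_id) (fun x => Set.mem_Ici.2 (le_max_left _ _))
  have hg'c : Continuous g' :=
    hg_cont.comp_continuous (continuous_const.max continuous_id) (fun x => Set.mem_Ici.2 (le_max_left _ _))
  have hFeq : ∀ x, c₄ ≤ x → F x = ∫ s in c₄..x, f' s := by
    intro x hx
    rw [hF]
    apply intervalIntegral.integral_congr
    intro s hs
    rw [uIcc_of_le hx] at hs
    simp [hf'def, max_eq_right hs.1]
  have hGeq : ∀ x, c₃ ≤ x → G x = ∫ s in c₃..x, g' s := by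
    intro x hx
    rw [hG]
    apply intervalIntegral.integral_congr
    intro s hs
    rw [uIcc_of_le hx] at hs
    simp [hg'def, max_eq_right hs.1]
  have hFd : ∀ x : ℝ, HasDerivAt (fun y => ∫ s in c₄..y, f' s) (f' x) x := by
    intro x
    exact intervalIntegral.integral_hasDerivAt_right (hf'c.intervalIntegrable _ _)
      (hf'c.stronglyMeasurableAtFilter _ _) hf'c.continuousAt
  have hGd : ∀ x : ℝ, HasDerivAt (fun y => ∫ s in c₃..y, g' s) (g' x) x := by
    intro x
    exact intervalIntegral.integral_hasDerivAt_right (hg'c.intervalIntegrable _ _)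
      (hg'c.stronglyMeasurableAtFilter _ _) hg'c.continuousAt
  have hmem : ∀ x ∈ Icc (0:ℝ) t, x ∈ Ico (0:ℝ) T := fun x hx =>
    ⟨hx.1, lt_of_le_of_lt hx.2 htT⟩
  -- nonnegativity of f(z x), g(w x)
  have hfz : ∀ x ∈ Ico (0:ℝ) T, 0 ≤ f (z x) := fun x hx => hf_nonneg _ (hz_ge x hx)
  have hgw : ∀ x ∈ Ico (0:ℝ) T, 0 ≤ g (w x) := fun x hx => hg_nonneg _ (hw_ge x hx)
  have hf'z : ∀ x ∈ Ico (0:ℝ) T, f' (z x) = f (z x) := fun x hx => by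
    simp [hf'def, max_eq_right (hz_ge x hx)]
  have hg'w : ∀ x ∈ Ico (0:ℝ) T, g' (w x) = g (w x) := fun x hx => by
    simp [hg'def, max_eq_right (hw_ge x hx)]
  -- first function: φ = F(z) - ε G(w)
  set φ : ℝ → ℝ := fun s => (∫ u in c₄..z s, f' u) - ε * ∫ u in c₃..w s, g' u with hφdef
  have hφd : ∀ x ∈ Ico (0:ℝ) T,
      HasDerivAt φ ((1 - ε) * (f (z x) * g (w x))) x := by
    intro x hx
    have h1 := ((hFd (z x)).comp x (hz' x hx)).sub
      (((hGd (w x)).comp x (hw' x hx)).const_mul ε)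
    rw [hf'z x hx, hg'w x hx] at h1
    convert h1 using 1
    · rfl
    · rfl
    · rfl
    · ring
  set ψ : ℝ → ℝ := fun s => K * (∫ u in c₃..w s, g' u) - ∫ u in c₄..z s, f' u with hψdef
  have hψd : ∀ x ∈ Ico (0:ℝ) T,
      HasDerivAt ψ ((K - 1) * (f (z x) * g (w x))) x := by
    intro x hx
    have h1 := (((hGd (w x)).comp x (hw' x hx)).const_mul K).sub
      ((hFd (z x)).comp x (hz' x hx))
    rw [hf'z x hx, hg'w x hx] at h1
    convert h1 using 1
    · rfl
    · rfl
    · rfl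
    · ring
  have hφmono : MonotoneOn φ (Icc 0 t) := by
    apply monotoneOn_of_deriv_nonneg (convex_Icc 0 t)
    · exact fun x hx => ((hφd x (hmem x hx)).continuousAt).continuousWithinAt
    · intro x hx
      rw [interior_Icc] at hx
      exact ((hφd x (hmem x ⟨le_of_lt hx.1, le_of_lt hx.2⟩)).differentiableAt).differentiableWithinAt
    · intro x hx
      rw [interior_Icc] at hx
      have hx' : x ∈ Ico (0:ℝ) T := hmem x ⟨le_of_lt hx.1, le_of_lt hx.2⟩
      rw [(hφd x hx').deriv]
      have := mul_nonneg (hfz x hx') (hgw x hx')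
      nlinarith
  have hψmono : MonotoneOn ψ (Icc 0 t) := by
    apply monotoneOn_of_deriv_nonneg (convex_Icc 0 t)
    · exact fun x hx => ((hψd x (hmem x hx)).continuousAt).continuousWithinAt
    · intro x hx
      rw [interior_Icc] at hx
      exact ((hψd x (hmem x ⟨le_of_lt hx.1, le_of_lt hx.2⟩)).differentiableAt).differentiableWithinAt
    · intro x hx
      rw [interior_Icc] at hx
      have hx' : x ∈ Ico (0:ℝ) T := hmem x ⟨le_of_lt hx.1, le_of_lt hx.2⟩
      rw [(hψd x hx').deriv]
      have := mul_nonneg (hfz x hx') (hgw x hx')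
      nlinarith
  have htT' : t ∈ Ico (0:ℝ) T := ⟨ht0, htT⟩
  have h0T : (0:ℝ) ∈ Ico (0:ℝ) T := ⟨le_refl _, lt_of_le_of_lt ht0 htT⟩
  have hφ0 : φ 0 = F c₂ - ε * G c₁ := by
    rw [hφdef]
    simp only [hw0, hz0]
    rw [hFeq c₂ hc₄₂, hGeq c₁ hc₃₁]
  have hφt : φ t = F (z t) - ε * G (w t) := by
    rw [hφdef]
    simp only
    rw [hFeq _ (hz_ge t htT'), hGeq _ (hw_ge t htT')]
  have hψ0 : ψ 0 = K * G c₁ - F c₂ := by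
    rw [hψdef]
    simp only [hw0, hz0]
    rw [hFeq c₂ hc₄₂, hGeq c₁ hc₃₁]
  have hψt : ψ t = K * G (w t) - F (z t) := by
    rw [hψdef]
    simp only
    rw [hFeq _ (hz_ge t htT'), hGeq _ (hw_ge t htT')]
  have h1 := hφmono (left_mem_Icc.2 ht0) (right_mem_Icc.2 ht0) ht0
  have h2 := hψmono (left_mem_Icc.2 ht0) (right_mem_Icc.2 ht0) ht0
  rw [hφ0, hφt] at h1
  rw [hψ0, hψt] at h2
  constructor <;> linarith
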